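/- Under the stated hypotheses, for the parallel hybrid algorithm, for every u ∈ F, every n ≥ 0 and every i = 1,…,N one has ‖u - y_n^i‖² ≤ ‖u - ū_n‖² ≤ ‖u - x_n‖² - λ(2α - λ)‖A_{k_n} z̄_n - A_{k_n} u‖². -/

import Mathlib

open Filter Topology
open scoped RealInnerProductSpace

/-- `p` is the metric projection of `x` onto the set `D`:
it belongs to `D` and minimizes the distance to `x` over `D`. -/
def IsMetricProj {H : Type*} [NormedAddCommGroup H] [InnerProductSpace ℝ H]
    (D : Set H) (x p : H) : Prop :=
  p ∈ D ∧ ∀ w ∈ D, ‖p - x‖ ≤ ‖w - x‖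

lemma proj_inner_le {H : Type*} [NormedAddCommGroup H] [InnerProductSpace ℝ H]
    {C : Set H} (hC : Convex ℝ C) {x p : H} (h : IsMetricProj C x p) :
    ∀ w ∈ C, ⟪x - p, w - p⟫ ≤ 0 := by
  intro w hw
  have key : ∀ t : ℝ, t ∈ Set.Ioc (0:ℝ) 1 → 0 ≤ 2 * ⟪p - x, w - p⟫ + t * ‖w - p‖ ^ 2 := by
    intro t ht
    have hmem : (1 - t) • p + t • w ∈ C :=
      hC h.1 hw (by linarith [ht.2]) ht.1.le (by ring)
    have hle := h.2 _ hmem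
    have heq : (1 - t) • p + t • w - x = (p - x) + t • (w - p) := by
      module
    rw [heq] at hle
    have hsq : ‖p - x‖ ^ 2 ≤ ‖(p - x) + t • (w - p)‖ ^ 2 :=
      pow_le_pow_left₀ (norm_nonneg _) hle 2
    have hexp : ‖(p - x) + t • (w - p)‖ ^ 2
        = ‖p - x‖ ^ 2 + 2 * (t * ⟪p - x, w - p⟫) + t ^ 2 * ‖w - p‖ ^ 2 := by
      rw [← real_inner_self_eq_norm_sq, ← real_inner_self_eq_norm_sq,
        ← real_inner_self_eq_norm_sq]
      simp only [inner_add_add_self, real_inner_smul_left, real_inner_smul_right,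
        real_inner_comm (w - p) (p - x)]
      ring
    rw [hexp] at hsq
    nlinarith [ht.1]
  have hc : 0 ≤ ⟪p - x, w - p⟫ := by
    by_contra hlt
    push_neg at hlt
    set c := ⟪p - x, w - p⟫
    set k := ‖w - p‖ ^ 2 with hk
    have hk0 : 0 ≤ k := by positivity
    rcases eq_or_lt_of_le hk0 with hk0' | hk0'
    · have := key 1 ⟨one_pos, le_refl 1⟩
      nlinarith
    · have ht : min 1 (-c / k) ∈ Set.Ioc (0:ℝ) 1 := by
        constructor
        · exact lt_min one_pos (div_pos (neg_pos.2 hlt) hk0')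
        · exact min_le_left _ _
      have := key _ ht
      have h2 : min 1 (-c / k) * k ≤ -c := by
        calc min 1 (-c / k) * k ≤ (-c / k) * k := by
              apply mul_le_mul_of_nonneg_right (min_le_right _ _) hk0
        _ = -c := by field_simp
      linarith
  have heq2 : ⟪x - p, w - p⟫ = -⟪p - x, w - p⟫ := by
    rw [← inner_neg_left]; congr 1; abel
  linarith [heq2 ▸ neg_nonpos_of_nonneg hc]

theorem key_quadratic_estimate
    {H : Type*} [NormedAddCommGroup H] [InnerProductSpace ℝ H] [CompleteSpace H]
    -- `C` is a nonempty closed convex subset of `H`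
    (C : Set H) (hCne : C.Nonempty) (hCcl : IsClosed C) (hCcv : Convex ℝ C)
    (K M N : ℕ)
    -- the bifunctions `f_l : C × C → ℝ` satisfy conditions (A1)-(A4)
    (f : Fin K → H → H → ℝ)
    (hfA1 : ∀ l, ∀ p ∈ C, f l p p = 0)
    (hfA2 : ∀ l, ∀ p ∈ C, ∀ q ∈ C, f l p q + f l q p ≤ 0)
    (hfA3 : ∀ l, ∀ p ∈ C, ∀ q ∈ C, ∀ w ∈ C,
      Filter.limsup (fun t : ℝ => f l (t • w + (1 - t) • p) q)
        (nhdsWithin 0 (Set.Ioi 0)) ≤ f l p q)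
    (hfA4cv : ∀ l, ∀ p ∈ C, ConvexOn ℝ C (f l p))
    (hfA4lsc : ∀ l, ∀ p ∈ C, LowerSemicontinuousOn (f l p) C)
    -- the mappings `A_k : C → H` are `α`-inverse strongly monotone
    (α : ℝ) (hα : 0 < α) (A : Fin M → H → H)
    (hA : ∀ k, ∀ p ∈ C, ∀ q ∈ C, α * ‖A k p - A k q‖ ^ 2 ≤ ⟪A k p - A k q, p - q⟫)
    -- the mappings `S_i : C → C` are nonexpansive
    (S : Fin N → H → H) (hSmap : ∀ i, ∀ p ∈ C, S i p ∈ C)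
    (hS : ∀ i, ∀ p ∈ C, ∀ q ∈ C, ‖S i p - S i q‖ ≤ ‖p - q‖)
    -- parameters: `λ ∈ (0, 2α)`, `{α_n} ⊂ [0,1]`, `{r_n} ⊂ [d, ∞)`, `d > 0`
    (lam : ℝ) (hlam : lam ∈ Set.Ioo 0 (2 * α))
    (a : ℕ → ℝ) (ha : ∀ n, a n ∈ Set.Icc (0 : ℝ) 1)
    (d : ℝ) (hd : 0 < d) (r : ℕ → ℝ) (hr : ∀ n, d ≤ r n)
    -- `F = (∩ EP(f_l)) ∩ (∩ F(S_i)) ∩ (∩ VI(A_k, C))` is nonempty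
    (F : Set H)
    (hF : F = {p | p ∈ C ∧ (∀ l, ∀ q ∈ C, 0 ≤ f l p q) ∧ (∀ i, S i p = p) ∧
      (∀ k, ∀ q ∈ C, 0 ≤ ⟪A k p, q - p⟫)})
    (hFne : F.Nonempty)
    -- the parallel hybrid algorithm
    (x : ℕ → H) (z : ℕ → Fin K → H) (uu : ℕ → Fin M → H) (y : ℕ → Fin N → H)
    (ln : ℕ → Fin K) (kn : ℕ → Fin M) (inn : ℕ → Fin N)
    (Cn Qn : ℕ → Set H)
    -- `z_n^l` solves the regularized equilibrium problem for `f_l` at `x_n`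
    (hz : ∀ n l, z n l ∈ C ∧
      ∀ q ∈ C, 0 ≤ f l (z n l) q + (1 / r n) * ⟪q - z n l, z n l - x n⟫)
    -- `l_n` attains `max{‖z_n^l - x_n‖}`, `z̄_n = z_n^{l_n}`
    (hln : ∀ n l, ‖z n l - x n‖ ≤ ‖z n (ln n) - x n‖)
    -- `u_n^k = P_C(z̄_n - λ A_k z̄_n)`
    (hu : ∀ n k, IsMetricProj C (z n (ln n) - lam • A k (z n (ln n))) (uu n k))
    -- `k_n` attains `max{‖u_n^k - x_n‖}`, `ū_n = u_n^{k_n}`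
    (hkn : ∀ n k, ‖uu n k - x n‖ ≤ ‖uu n (kn n) - x n‖)
    -- `y_n^i = α_n ū_n + (1 - α_n) S_i ū_n`
    (hy : ∀ n i, y n i = a n • uu n (kn n) + (1 - a n) • S i (uu n (kn n)))
    -- `i_n` attains `max{‖y_n^i - x_n‖}`, `ȳ_n = y_n^{i_n}`
    (hin : ∀ n i, ‖y n i - x n‖ ≤ ‖y n (inn n) - x n‖)
    -- `C_n = {v : ‖v - ȳ_n‖ ≤ ‖v - z̄_n‖ ≤ ‖v - x_n‖}`
    (hCn : ∀ n, Cn n = {v | ‖v - y n (inn n)‖ ≤ ‖v - z n (ln n)‖ ∧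
      ‖v - z n (ln n)‖ ≤ ‖v - x n‖})
    -- `Q_n = {v : ⟨x_0 - x_n, x_n - v⟩ ≥ 0}`
    (hQn : ∀ n, Qn n = {v | 0 ≤ ⟪x 0 - x n, x n - v⟫})
    -- `x_{n+1} = P_{C_n ∩ Q_n} x_0`
    (hx : ∀ n, IsMetricProj (Cn n ∩ Qn n) (x 0) (x (n + 1)))
    :
    ∀ u ∈ F, ∀ n, ∀ i,
      ‖u - y n i‖ ^ 2 ≤ ‖u - uu n (kn n)‖ ^ 2 ∧
      ‖u - uu n (kn n)‖ ^ 2 ≤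
        ‖u - x n‖ ^ 2 - lam * (2 * α - lam) * ‖A (kn n) (z n (ln n)) - A (kn n) u‖ ^ 2 := by
  intro u huF n i
  rw [hF] at huF
  obtain ⟨huC, huEP, huFix, huVI⟩ := huF
  obtain ⟨hlam0, hlam2⟩ := hlam
  set zb := z n (ln n) with hzbdef
  set ub := uu n (kn n) with hubdef
  have hzbC : zb ∈ C := (hz n (ln n)).1
  have hubP := hu n (kn n)
  have hubC : ub ∈ C := hubP.1
  set Akz := A (kn n) zb with hAkzdef
  set Aku := A (kn n) u with hAkudef
  -- Step C : ‖u - zb‖² ≤ ‖u - x n‖²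
  have hfzu : f (ln n) zb u ≤ 0 := by
    have h1 := hfA2 (ln n) zb hzbC u huC
    have h2 := huEP (ln n) zb hzbC
    linarith
  have hinner : 0 ≤ ⟪u - zb, zb - x n⟫ := by
    have h1 := (hz n (ln n)).2 u huC
    have hrpos : (0:ℝ) < 1 / r n := one_div_pos.2 (lt_of_lt_of_le hd (hr n))
    nlinarith
  have hC1 : ‖u - zb‖ ^ 2 ≤ ‖u - x n‖ ^ 2 := by
    have heq : u - x n = (u - zb) + (zb - x n) := by abel
    rw [heq, norm_add_sq_real]
    nlinarith [sq_nonneg ‖zb - x n‖]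
  -- Step A : ‖ub - u‖² ≤ ‖(zb - lam • Akz) - (u - lam • Aku)‖²
  have h1 : ⟪(zb - lam • Akz) - ub, u - ub⟫ ≤ 0 := proj_inner_le hCcv hubP u huC
  have h2 : 0 ≤ ⟪Aku, ub - u⟫ := huVI (kn n) ub hubC
  have hA1 : ‖ub - u‖ ^ 2 ≤ ⟪(zb - lam • Akz) - (u - lam • Aku), ub - u⟫ := by
    have hd1 : (zb - lam • Akz) - (u - lam • Aku)
        = ((zb - lam • Akz) - ub) + ((ub - u) + lam • Aku) := by module
    rw [hd1, inner_add_left, inner_add_left]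
    have e1 : ⟪(zb - lam • Akz) - ub, ub - u⟫ = -⟪(zb - lam • Akz) - ub, u - ub⟫ := by
      rw [← inner_neg_right]; congr 1; abel
    have e2 : ⟪lam • Aku, ub - u⟫ = lam * ⟪Aku, ub - u⟫ := real_inner_smul_left _ _ _
    rw [e1, e2, real_inner_self_eq_norm_sq]
    nlinarith
  have hA2 : ‖ub - u‖ ^ 2 ≤ ‖(zb - lam • Akz) - (u - lam • Aku)‖ ^ 2 := by
    have hcs := real_inner_le_norm ((zb - lam • Akz) - (u - lam • Aku)) (ub - u)
    nlinarith [sq_nonneg (‖(zb - lam • Akz) - (u - lam • Aku)‖ - ‖ub - u‖)]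
  -- Step B : expansion of the squared norm
  have hB : ‖(zb - lam • Akz) - (u - lam • Aku)‖ ^ 2
      ≤ ‖zb - u‖ ^ 2 - lam * (2 * α - lam) * ‖Akz - Aku‖ ^ 2 := by
    have hd2 : (zb - lam • Akz) - (u - lam • Aku) = (zb - u) - lam • (Akz - Aku) := by
      module
    rw [hd2, norm_sub_sq_real, real_inner_smul_right, norm_smul, Real.norm_eq_abs,
      mul_pow, sq_abs]
    have hmono := hA (kn n) zb hzbC u huC
    rw [← hAkzdef, ← hAkudef] at hmono
    have hcomm : ⟪zb - u, Akz - Aku⟫ = ⟪Akz - Aku, zb - u⟫ := real_inner_comm _ _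
    nlinarith
  -- combine, and rewrite orientation of differences
  have hnz : ‖u - zb‖ = ‖zb - u‖ := norm_sub_rev _ _
  have hnu : ‖u - ub‖ = ‖ub - u‖ := norm_sub_rev _ _
  constructor
  · -- first inequality
    have hfix : S i u = u := huFix i
    have hSne : ‖u - S i ub‖ ≤ ‖u - ub‖ := by
      have := hS i u huC ub hubC
      rwa [hfix] at this
    have hpart1 : ‖u - y n i‖ ≤ ‖u - ub‖ := by
      rw [hy n i, ← hubdef]
      have hdec : u - (a n • ub + (1 - a n) • S i ub)
          = a n • (u - ub) + (1 - a n) • (u - S i ub) := by module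
      rw [hdec]
      have ha0 := (ha n).1
      have ha1 := (ha n).2
      calc ‖a n • (u - ub) + (1 - a n) • (u - S i ub)‖
          ≤ ‖a n • (u - ub)‖ + ‖(1 - a n) • (u - S i ub)‖ := norm_add_le _ _
        _ = a n * ‖u - ub‖ + (1 - a n) * ‖u - S i ub‖ := by
            rw [norm_smul, norm_smul, Real.norm_eq_abs, Real.norm_eq_abs,
              abs_of_nonneg ha0, abs_of_nonneg (by linarith)]
        _ ≤ a n * ‖u - ub‖ + (1 - a n) * ‖u - ub‖ := by
            have := mul_le_mul_of_nonneg_left hSne (by linarith : (0:ℝ) ≤ 1 - a n)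
            linarith
        _ = ‖u - ub‖ := by ring
    exact pow_le_pow_left₀ (norm_nonneg _) hpart1 2
  · -- second inequality
    calc ‖u - ub‖ ^ 2 = ‖ub - u‖ ^ 2 := by rw [hnu]
      _ ≤ ‖(zb - lam • Akz) - (u - lam • Aku)‖ ^ 2 := hA2
      _ ≤ ‖zb - u‖ ^ 2 - lam * (2 * α - lam) * ‖Akz - Aku‖ ^ 2 := hB
      _ = ‖u - zb‖ ^ 2 - lam * (2 * α - lam) * ‖Akz - Aku‖ ^ 2 := by rw [hnz]
      _ ≤ ‖u - x n‖ ^ 2 - lam * (2 * α - lam) * ‖Akz - Aku‖ ^ 2 := by linarith
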